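/- Let k be a field of characteristic zero and let P be a nonconstant polynomial differential operator in one variable over k, i.e., a k-linear endomorphism of k[x] of the form P = a_n d^n/dx^n + ... + a_1 d/dx + a_0 with a_i ∈ k[x], which is not a scalar (not an element of k acting by multiplication). Then the centralizer of P in the ring of all polynomial differential operators in one variable over k is a commutative ring. -/

import Mathlib

set_option linter.unusedSectionVars false

open Polynomial

namespace WeylCent

variable {k : Type*} [Field k] [CharZero k]

noncomputable section

/-- multiplication operators -/
def M : Polynomial k →ₐ[k] Module.End k (Polynomial k) := Algebra.lmul k (Polynomial k)

/-- the derivative operator -/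
def D : Module.End k (Polynomial k) := Polynomial.derivative

lemma M_apply (a f : Polynomial k) : M a f = a * f := rfl

/-- x-derivative on k[x][y] (coefficientwise derivative) -/
def dxFun (p : Polynomial (Polynomial k)) : Polynomial (Polynomial k) :=
  p.sum fun i a => monomial i (derivative a)

lemma dxFun_coeff (p : Polynomial (Polynomial k)) (j : ℕ) :
    (dxFun p).coeff j = derivative (p.coeff j) := by
  rw [dxFun, Polynomial.sum, finset_sum_coeff]
  simp only [coeff_monomial]
  rw [Finset.sum_ite_eq' p.support j (fun i => derivative (p.coeff i))]
  by_cases h : j ∈ p.support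
  · simp [h]
  · simp [h, Polynomial.notMem_support_iff.mp h]

def dx : Module.End k (Polynomial (Polynomial k)) where
  toFun := dxFun
  map_add' p q := by
    ext j
    simp [dxFun_coeff]
  map_smul' c p := by
    ext j
    simp [dxFun_coeff]

lemma dx_coeff (p : Polynomial (Polynomial k)) (j : ℕ) :
    (dx p).coeff j = derivative (p.coeff j) := dxFun_coeff p j

def mulX : Module.End k (Polynomial (Polynomial k)) := LinearMap.mulLeft k X

lemma mulX_apply (p : Polynomial (Polynomial k)) : mulX p = X * p := rfl

def L : Module.End k (Polynomial (Polynomial k)) := mulX + dx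

lemma commute_mulX_dx : Commute (mulX (k := k)) dx := by
  apply LinearMap.ext
  intro p
  show mulX (dx p) = dx (mulX p)
  ext j
  cases j with
  | zero => simp [mulX_apply, dx_coeff, coeff_X_mul_zero]
  | succ n => simp [mulX_apply, dx_coeff, coeff_X_mul]

/-- the representation map k[x][y] → End(k[x]) -/
def Φ (c : Polynomial (Polynomial k)) : Module.End k (Polynomial k) :=
  c.eval₂ (M (k := k)).toRingHom D

lemma Φ_monomial (i : ℕ) (a : Polynomial k) : Φ (monomial i a) = M a * D ^ i :=
  eval₂_monomial _ _

lemma Φ_add (c d : Polynomial (Polynomial k)) : Φ (c + d) = Φ c + Φ d := eval₂_add _ _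

lemma Φ_zero : Φ (0 : Polynomial (Polynomial k)) = 0 := eval₂_zero _ _

lemma Φ_one : Φ (1 : Polynomial (Polynomial k)) = 1 := eval₂_one _ _

lemma Φ_C (a : Polynomial k) : Φ (C a) = M a := eval₂_C _ _

lemma Φ_X : Φ (X : Polynomial (Polynomial k)) = D := eval₂_X _ _

lemma Φ_sub (c d : Polynomial (Polynomial k)) : Φ (c - d) = Φ c - Φ d := by
  have := Φ_add (c - d) d
  rw [sub_add_cancel] at this
  rw [this, add_sub_cancel_right]


lemma dx_monomial (i : ℕ) (a : Polynomial k) :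
    dx (monomial i a) = monomial i (derivative a) := by
  ext j
  rw [dx_coeff]
  simp only [coeff_monomial]
  split <;> simp

lemma DM (a : Polynomial k) : D * M a = M (derivative a) + M a * D := by
  apply LinearMap.ext
  intro f
  show D (M a f) = M (derivative a) f + M a (D f)
  simp only [M_apply]
  show derivative (a * f) = derivative a * f + a * derivative f
  exact derivative_mul

lemma key1 (d : Polynomial (Polynomial k)) : D * Φ d = Φ (L d) := by
  induction d using Polynomial.induction_on' with
  | add p q hp hq => rw [Φ_add, mul_add, hp, hq, map_add, Φ_add]
  | monomial i a =>
      rw [Φ_monomial, ← mul_assoc, DM, L]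
      rw [LinearMap.add_apply, mulX_apply, X_mul_monomial, dx_monomial, Φ_add,
        Φ_monomial, Φ_monomial, add_mul, mul_assoc, ← pow_succ']
      exact add_comm _ _

lemma keyPow (i : ℕ) (d : Polynomial (Polynomial k)) : D ^ i * Φ d = Φ ((L ^ i) d) := by
  induction i with
  | zero => simp
  | succ n ih =>
      rw [pow_succ', mul_assoc, ih, key1, pow_succ']
      rfl

lemma keyC (a : Polynomial k) (d : Polynomial (Polynomial k)) :
    M a * Φ d = Φ (C a * d) := by
  induction d using Polynomial.induction_on' with
  | add p q hp hq => rw [Φ_add, mul_add, hp, hq, mul_add, Φ_add]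
  | monomial i b =>
      rw [Φ_monomial, ← mul_assoc, ← map_mul, C_mul_monomial, Φ_monomial]

/-- the transported (noncommutative) product on k[x][y] -/
def star (c d : Polynomial (Polynomial k)) : Polynomial (Polynomial k) :=
  c.sum fun i a => C a * ((L ^ i) d)

lemma Φ_star (c d : Polynomial (Polynomial k)) : Φ (star c d) = Φ c * Φ d := by
  rw [star, Polynomial.sum]
  show eval₂ _ _ _ = _
  rw [eval₂_finset_sum]
  have hc : Φ c = ∑ i ∈ c.support, M (c.coeff i) * D ^ i := by
    show eval₂ _ _ _ = _
    rw [eval₂_eq_sum, Polynomial.sum]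
    rfl
  rw [hc, Finset.sum_mul]
  apply Finset.sum_congr rfl
  intro i _
  show Φ (C (c.coeff i) * (L ^ i) d) = _
  rw [← keyC, ← keyPow, mul_assoc]


lemma Φ_apply (c : Polynomial (Polynomial k)) (f : Polynomial k) :
    Φ c f = ∑ i ∈ c.support, c.coeff i * derivative^[i] f := by
  have hc : Φ c = ∑ i ∈ c.support, M (c.coeff i) * D ^ i := by
    show eval₂ _ _ _ = _
    rw [eval₂_eq_sum, Polynomial.sum]
    rfl
  rw [hc, LinearMap.sum_apply]
  apply Finset.sum_congr rfl
  intro i _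
  rw [Module.End.mul_apply, Module.End.pow_apply]
  rfl

lemma Φ_inj {c : Polynomial (Polynomial k)} (h : Φ c = 0) : c = 0 := by
  have H : ∀ j, c.coeff j = 0 := by
    intro j
    induction j using Nat.strong_induction_on with
    | _ j ih =>
      by_cases hj : j ∈ c.support
      · have h0 : Φ c (X ^ j) = 0 := by rw [h]; rfl
        rw [Φ_apply] at h0
        rw [Finset.sum_eq_single j] at h0
        · rw [iterate_derivative_X_pow_eq_smul, Nat.sub_self, pow_zero] at h0
          have hne : (j.descFactorial j : k) ≠ 0 := by
            rw [Nat.descFactorial_self]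
            exact_mod_cast Nat.cast_ne_zero.mpr (Nat.factorial_ne_zero j)
          have h2 : c.coeff j * ((j.descFactorial j : k) • (1 : Polynomial k)) = 0 := h0
          rw [smul_eq_C_mul, mul_one] at h2
          rcases mul_eq_zero.mp h2 with h3 | h3
          · exact h3
          · exact absurd (C_eq_zero.mp h3) (by exact_mod_cast hne)
        · intro i hi hij
          rcases lt_or_gt_of_ne hij with hlt | hgt
          · rw [ih i hlt, zero_mul]
          · rw [iterate_derivative_X_pow_eq_smul,
              (Nat.descFactorial_eq_zero_iff_lt).mpr hgt]
            simp
        · intro hj'; exact absurd hj hj'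
      · exact Polynomial.notMem_support_iff.mp hj
  exact Polynomial.ext fun j => by rw [H j, coeff_zero]

lemma mulX_pow (m : ℕ) (e : Polynomial (Polynomial k)) : (mulX ^ m) e = X ^ m * e := by
  induction m with
  | zero => simp
  | succ n ih => rw [pow_succ', Module.End.mul_apply, ih, mulX_apply, pow_succ', mul_assoc]

lemma dx_pow_coeff (s : ℕ) (e : Polynomial (Polynomial k)) (j : ℕ) :
    ((dx ^ s) e).coeff j = derivative^[s] (e.coeff j) := by
  induction s generalizing e with
  | zero => simp
  | succ n ih =>
      rw [pow_succ, Module.End.mul_apply, ih (dx e), dx_coeff,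
        Function.iterate_succ_apply]

lemma Lpow_apply (i : ℕ) (d : Polynomial (Polynomial k)) :
    (L ^ i) d = ∑ m ∈ Finset.range (i + 1),
      (i.choose m) • (X ^ m * ((dx ^ (i - m)) d)) := by
  rw [L, commute_mulX_dx.add_pow i, LinearMap.sum_apply]
  apply Finset.sum_congr rfl
  intro m _
  rw [Module.End.mul_apply, Module.End.mul_apply, Module.End.natCast_apply,
    map_nsmul, map_nsmul, mulX_pow]

lemma master (c d : Polynomial (Polynomial k)) (T : ℕ) :
    (star c d).coeff T = ∑ i ∈ c.support, c.coeff i *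
      ∑ m ∈ Finset.range (i + 1), (i.choose m : Polynomial k) *
        (if m ≤ T then derivative^[i - m] (d.coeff (T - m)) else 0) := by
  rw [star, Polynomial.sum, finset_sum_coeff]
  apply Finset.sum_congr rfl
  intro i _
  rw [coeff_C_mul]
  congr 1
  rw [Lpow_apply, finset_sum_coeff]
  apply Finset.sum_congr rfl
  intro m _
  rw [coeff_smul, mul_comm (X ^ m), coeff_mul_X_pow', nsmul_eq_mul]
  congr 1
  split
  · rw [dx_pow_coeff]
  · rfl


lemma eqOfΦ {u v : Polynomial (Polynomial k)} (h : Φ u = Φ v) : u = v := by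
  have h2 : Φ (u - v) = 0 := by rw [Φ_sub, h, sub_self]
  have := Φ_inj h2
  linear_combination (norm := ring_nf) this

lemma Φ_smul (γ : k) (c : Polynomial (Polynomial k)) : Φ (γ • c) = γ • Φ c := by
  have h1 : γ • c = C (C γ) * c := by
    rw [← smul_eq_C_mul]
    exact (algebraMap_smul (Polynomial k) γ c).symm
  rw [h1, ← keyC]
  have h2 : M (C γ) = algebraMap k (Module.End k (Polynomial k)) γ := by
    rw [← Polynomial.algebraMap_eq]
    exact M.commutes γ
  rw [h2, ← Algebra.smul_def]

lemma star_zero_right (c : Polynomial (Polynomial k)) : star c 0 = 0 :=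
  Φ_inj (by rw [Φ_star, Φ_zero, mul_zero])

lemma star_zero_left (d : Polynomial (Polynomial k)) : star 0 d = 0 :=
  Φ_inj (by rw [Φ_star, Φ_zero, zero_mul])

lemma TOP {c d : Polynomial (Polynomial k)} {nn mm : ℕ}
    (hc : ∀ i, nn < i → c.coeff i = 0) (hd : ∀ j, mm < j → d.coeff j = 0) :
    (star c d).coeff (nn + mm) = c.coeff nn * d.coeff mm := by
  rw [master]
  rw [Finset.sum_eq_single nn]
  · congr 1
    rw [Finset.sum_eq_single nn]
    · rw [Nat.choose_self, Nat.cast_one, one_mul, if_pos (Nat.le_add_right nn mm),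
        Nat.sub_self, Nat.add_sub_cancel_left]
      rfl
    · intro m hm hmne
      have hmlt : m < nn := lt_of_le_of_ne (Nat.lt_succ_iff.mp (Finset.mem_range.mp hm)) hmne
      rw [if_pos (le_trans (le_of_lt hmlt) (Nat.le_add_right nn mm))]
      rw [hd (nn + mm - m) (by omega), iterate_derivative_zero, mul_zero]
    · intro h; exact absurd (Finset.self_mem_range_succ nn) h
  · intro i hi hine
    rcases lt_or_gt_of_ne hine with hlt | hgt
    · rw [Finset.sum_eq_zero, mul_zero]
      intro m hm
      have hmle : m ≤ i := Nat.lt_succ_iff.mp (Finset.mem_range.mp hm)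
      rw [if_pos (by omega), hd (nn + mm - m) (by omega), iterate_derivative_zero,
        mul_zero]
    · rw [hc i hgt, zero_mul]
  · intro h
    rw [Polynomial.notMem_support_iff.mp h, zero_mul]

lemma BND {c d : Polynomial (Polynomial k)} {nn mm : ℕ}
    (hc : ∀ i, nn < i → c.coeff i = 0) (hd : ∀ j, mm < j → d.coeff j = 0)
    (T : ℕ) (hT : nn + mm < T) : (star c d).coeff T = 0 := by
  rw [master]
  apply Finset.sum_eq_zero
  intro i hi
  have hile : i ≤ nn := by
    by_contra hcon
    exact (Polynomial.mem_support_iff.mp hi) (hc i (by omega))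
  rw [Finset.sum_eq_zero, mul_zero]
  intro m hm
  have hmle : m ≤ i := Nat.lt_succ_iff.mp (Finset.mem_range.mp hm)
  by_cases hmt : m ≤ T
  · rw [if_pos hmt, hd (T - m) (by omega), iterate_derivative_zero, mul_zero]
  · rw [if_neg hmt, mul_zero]


lemma star_add_left (a b e : Polynomial (Polynomial k)) :
    star (a + b) e = star a e + star b e :=
  eqOfΦ (by rw [Φ_star, Φ_add, Φ_add, Φ_star, Φ_star, add_mul])

lemma star_add_right (a b e : Polynomial (Polynomial k)) :
    star e (a + b) = star e a + star e b :=
  eqOfΦ (by rw [Φ_star, Φ_add, Φ_add, Φ_star, Φ_star, mul_add])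

lemma MONO0 (δ : Polynomial k) (e : Polynomial (Polynomial k)) :
    star (C δ) e = C δ * e :=
  eqOfΦ (by rw [Φ_star, Φ_C, keyC])

lemma MONO {nn mm : ℕ} (hnn : 1 ≤ nn) (γ δ : Polynomial k) :
    (star (monomial nn γ) (monomial mm δ)).coeff (nn - 1 + mm)
      = nn • (γ * derivative δ) := by
  by_cases hγ : γ = 0
  · rw [hγ, monomial_zero_right, star_zero_left, coeff_zero, zero_mul, smul_zero]
  rw [master]
  rw [support_monomial nn hγ, Finset.sum_singleton, coeff_monomial, if_pos rfl]
  rw [Finset.sum_eq_single (nn - 1)]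
  · rw [if_pos (by omega)]
    have h1 : nn - 1 + mm - (nn - 1) = mm := by omega
    have h2 : nn - (nn - 1) = 1 := by omega
    have h3 : nn.choose (nn - 1) = nn := by
      rw [← Nat.choose_symm (by omega : nn - 1 ≤ nn)]
      have : nn - (nn - 1) = 1 := by omega
      rw [this, Nat.choose_one_right]
    rw [h1, h2, h3, coeff_monomial, if_pos rfl]
    rw [Function.iterate_one, nsmul_eq_mul]
    ring
  · intro m hm hmne
    have hmle : m ≤ nn := Nat.lt_succ_iff.mp (Finset.mem_range.mp hm)
    by_cases hmt : m ≤ nn - 1 + mm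
    · rw [if_pos hmt, coeff_monomial, if_neg (by omega), iterate_derivative_zero,
        mul_zero]
    · rw [if_neg hmt, mul_zero]
  · intro h
    exact absurd (Finset.mem_range.mpr (by omega)) h

lemma U1 {c d : Polynomial (Polynomial k)} {nn mm : ℕ} (hnn : 1 ≤ nn)
    (hc : ∀ i, nn < i → c.coeff i = 0) (hd : ∀ j, mm < j → d.coeff j = 0) :
    (star c d).coeff (nn - 1 + mm) - (star d c).coeff (nn - 1 + mm)
      = nn • (c.coeff nn * derivative (d.coeff mm))
        - mm • (derivative (c.coeff nn) * d.coeff mm) := by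
  set γ := c.coeff nn with hγdef
  set c' := c.erase nn with hc'def
  have hcsplit : c = monomial nn γ + c' := (monomial_add_erase c nn).symm
  have hc'bnd : ∀ i, nn - 1 < i → c'.coeff i = 0 := by
    intro i hi
    rw [hc'def, coeff_erase]
    split
    · rfl
    · next hne => exact hc i (by omega)
  have hcnn' : c'.coeff (nn - 1) = c.coeff (nn - 1) := by
    rw [hc'def, coeff_erase, if_neg (by omega)]
  by_cases hmm : mm = 0
  · subst hmm
    set δ := d.coeff 0 with hδdef
    have hdC : d = C δ := by
      apply Polynomial.ext
      intro j
      cases j with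
      | zero => simp [hδdef]
      | succ n => rw [hd (n+1) (by omega), coeff_C]; simp
    have e1 : (star d c).coeff (nn - 1 + 0) = δ * c.coeff (nn - 1) := by
      conv_lhs => rw [hdC]
      rw [MONO0, coeff_C_mul, Nat.add_zero]
    have e2 : (star c d).coeff (nn - 1 + 0) = nn • (γ * derivative δ)
        + c'.coeff (nn - 1) * δ := by
      conv_lhs => rw [hcsplit, hdC]
      rw [star_add_left, coeff_add, ← monomial_zero_left]
      have t1 : (star (monomial nn γ) (monomial 0 δ)).coeff (nn - 1 + 0)
          = nn • (γ * derivative δ) := MONO hnn γ δ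
      have t2 : (star c' (monomial 0 δ)).coeff (nn - 1 + 0)
          = c'.coeff (nn - 1) * δ := by
        have h := TOP (c := c') (d := monomial 0 δ) (nn := nn - 1) (mm := 0)
          hc'bnd (by intro j hj; rw [coeff_monomial, if_neg (by omega)])
        rw [coeff_monomial, if_pos rfl] at h
        exact h
      rw [t1, t2]
    rw [e1, e2, hcnn', zero_smul, sub_zero]
    ring
  · have hmm1 : 1 ≤ mm := by omega
    set δ := d.coeff mm with hδdef
    set d' := d.erase mm with hd'def
    have hdsplit : d = monomial mm δ + d' := (monomial_add_erase d mm).symm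
    have hd'bnd : ∀ j, mm - 1 < j → d'.coeff j = 0 := by
      intro j hj
      rw [hd'def, coeff_erase]
      split
      · rfl
      · next hne => exact hd j (by omega)
    have hd'bnd2 : ∀ j, mm < j → d'.coeff j = 0 := fun j hj => hd'bnd j (by omega)
    have hdmm' : d'.coeff (mm - 1) = d.coeff (mm - 1) := by
      rw [hd'def, coeff_erase, if_neg (by omega)]
    have hmcbnd : ∀ i, nn < i → (monomial nn γ).coeff i = 0 := by
      intro i hi; rw [coeff_monomial, if_neg (by omega)]
    have hmdbnd : ∀ j, mm < j → (monomial mm δ).coeff j = 0 := by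
      intro j hj; rw [coeff_monomial, if_neg (by omega)]
    have A1 : (star (monomial nn γ) (monomial mm δ)).coeff (nn - 1 + mm)
        = nn • (γ * derivative δ) := MONO hnn γ δ
    have A2 : (star (monomial nn γ) d').coeff (nn - 1 + mm)
        = γ * d'.coeff (mm - 1) := by
      have h := TOP (c := monomial nn γ) (d := d') (nn := nn) (mm := mm - 1)
        hmcbnd hd'bnd
      rw [coeff_monomial, if_pos rfl] at h
      rw [show nn - 1 + mm = nn + (mm - 1) by omega]
      exact h
    have A3 : (star c' (monomial mm δ)).coeff (nn - 1 + mm)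
        = c.coeff (nn - 1) * δ := by
      have h := TOP (c := c') (d := monomial mm δ) (nn := nn - 1) (mm := mm)
        hc'bnd hmdbnd
      rw [coeff_monomial, if_pos rfl, hcnn'] at h
      exact h
    have A4 : (star c' d').coeff (nn - 1 + mm) = 0 := by
      have h := TOP (c := c') (d := d') (nn := nn - 1) (mm := mm) hc'bnd hd'bnd2
      rw [erase_same, mul_zero] at h
      exact h
    have B1 : (star (monomial mm δ) (monomial nn γ)).coeff (nn - 1 + mm)
        = mm • (δ * derivative γ) := by
      have h := MONO (nn := mm) (mm := nn) hmm1 δ γ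
      rw [show nn - 1 + mm = mm - 1 + nn by omega]
      exact h
    have B2 : (star (monomial mm δ) c').coeff (nn - 1 + mm)
        = δ * c.coeff (nn - 1) := by
      have h := TOP (c := monomial mm δ) (d := c') (nn := mm) (mm := nn - 1)
        hmdbnd hc'bnd
      rw [coeff_monomial, if_pos rfl, hcnn'] at h
      rw [show nn - 1 + mm = mm + (nn - 1) by omega]
      exact h
    have B3 : (star d' (monomial nn γ)).coeff (nn - 1 + mm)
        = d.coeff (mm - 1) * γ := by
      have h := TOP (c := d') (d := monomial nn γ) (nn := mm - 1) (mm := nn)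
        hd'bnd hmcbnd
      rw [coeff_monomial, if_pos rfl, hdmm'] at h
      rw [show nn - 1 + mm = mm - 1 + nn by omega]
      exact h
    have B4 : (star d' c').coeff (nn - 1 + mm) = 0 := by
      have h := TOP (c := d') (d := c') (nn := mm) (mm := nn - 1) hd'bnd2 hc'bnd
      rw [erase_same, zero_mul] at h
      rw [show nn - 1 + mm = mm + (nn - 1) by omega]
      exact h
    have hL : (star c d).coeff (nn - 1 + mm)
        = nn • (γ * derivative δ) + γ * d'.coeff (mm - 1)
          + c.coeff (nn - 1) * δ + 0 := by
      conv_lhs => rw [hcsplit, hdsplit]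
      rw [star_add_left, star_add_right, star_add_right, coeff_add, coeff_add,
        coeff_add, A1, A2, A3, A4]
      ring
    have hR : (star d c).coeff (nn - 1 + mm)
        = mm • (δ * derivative γ) + δ * c.coeff (nn - 1)
          + d.coeff (mm - 1) * γ + 0 := by
      conv_lhs => rw [hcsplit, hdsplit]
      rw [star_add_left, star_add_right, star_add_right, coeff_add, coeff_add,
        coeff_add, B1, B2, B3, B4]
      ring
    rw [hL, hR, hdmm'.symm]
    simp only [nsmul_eq_mul]
    ring


lemma PROP : ∀ (N : ℕ) (b c : Polynomial k), b.natDegree + c.natDegree ≤ N →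
    b ≠ 0 → c ≠ 0 → b * derivative c = derivative b * c →
    ∃ μ : k, μ ≠ 0 ∧ b = C μ * c := by
  intro N
  induction N using Nat.strong_induction_on with
  | _ N ih =>
    intro b c hN hb hc hrel
    by_cases hc0 : c.natDegree = 0
    · set γ := c.coeff 0 with hγdef
      set β := b.coeff 0 with hβdef
      have hcC : c = C γ := eq_C_of_natDegree_eq_zero hc0
      have hγ : γ ≠ 0 := fun h => hc (by rw [hcC, h, map_zero])
      have hdc : derivative c = 0 := by rw [hcC, derivative_C]
      rw [hdc, mul_zero] at hrel
      have hb' : derivative b = 0 := by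
        rcases mul_eq_zero.mp hrel.symm with h | h
        · exact h
        · exact absurd h hc
      have hbC : b = C β := eq_C_of_derivative_eq_zero hb'
      have hβ : β ≠ 0 := fun h => hb (by rw [hbC, h, map_zero])
      refine ⟨β * γ⁻¹, mul_ne_zero hβ (inv_ne_zero hγ), ?_⟩
      rw [hcC, hbC, ← map_mul]
      congr 1
      field_simp
    by_cases hb0 : b.natDegree = 0
    · have hbC : b = C (b.coeff 0) := eq_C_of_natDegree_eq_zero hb0
      have hβ : b.coeff 0 ≠ 0 := fun h => hb (by rw [hbC, h, map_zero])
      have hdb : derivative b = 0 := by rw [hbC, derivative_C]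
      rw [hdb, zero_mul] at hrel
      have hc' : derivative c = 0 := by
        rcases mul_eq_zero.mp hrel with h | h
        · exact absurd h hb
        · exact h
      exact absurd (natDegree_eq_zero_of_derivative_eq_zero hc') hc0
    · -- main case
      set p := b.natDegree with hp
      set q := c.natDegree with hq
      have hp1 : 1 ≤ p := by omega
      have hq1 : 1 ≤ q := by omega
      have hbp : b.coeff p ≠ 0 := by
        rw [hp]; exact mt leadingCoeff_eq_zero.mp hb
      have hcq : c.coeff q ≠ 0 := by
        rw [hq]; exact mt leadingCoeff_eq_zero.mp hc
      -- compare top coefficients to get p = q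
      have hdc : (derivative c).natDegree ≤ q - 1 :=
        Nat.le_sub_one_of_lt (natDegree_derivative_lt hc0)
      have hdb : (derivative b).natDegree ≤ p - 1 :=
        Nat.le_sub_one_of_lt (natDegree_derivative_lt hb0)
      have hqcast : ((q - 1 : ℕ) : k) + 1 = (q : k) := by
        have h : ((q - 1) + 1 : ℕ) = q := by omega
        calc ((q - 1 : ℕ) : k) + 1 = (((q - 1) + 1 : ℕ) : k) := by push_cast; ring
          _ = (q : k) := by rw [h]
      have hpcast : ((p - 1 : ℕ) : k) + 1 = (p : k) := by
        have h : ((p - 1) + 1 : ℕ) = p := by omega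
        calc ((p - 1 : ℕ) : k) + 1 = (((p - 1) + 1 : ℕ) : k) := by push_cast; ring
          _ = (p : k) := by rw [h]
      have e1 : (b * derivative c).coeff (p + (q - 1))
          = b.coeff p * (c.coeff q * ((q : k))) := by
        rw [coeff_mul_add_eq_of_natDegree_le le_rfl hdc, coeff_derivative,
          show q - 1 + 1 = q from by omega, hqcast]
      have e2 : (derivative b * c).coeff ((p - 1) + q)
          = b.coeff p * ((p : k)) * c.coeff q := by
        rw [coeff_mul_add_eq_of_natDegree_le hdb le_rfl, coeff_derivative,
          show p - 1 + 1 = p from by omega, hpcast]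
      have hidx : p + (q - 1) = (p - 1) + q := by omega
      have e3 : b.coeff p * (c.coeff q * (q : k)) = b.coeff p * (p : k) * c.coeff q := by
        rw [← e1, ← e2, hidx, hrel]
      have h4 : (b.coeff p * c.coeff q) * (q : k) = (b.coeff p * c.coeff q) * (p : k) := by
        linear_combination e3
      have h5 : (q : k) = (p : k) := mul_left_cancel₀ (mul_ne_zero hbp hcq) h4
      have hpq : p = q := by exact_mod_cast h5.symm
      set d := C (c.coeff q) * b - C (b.coeff p) * c with hd
      have hdd : derivative d = C (c.coeff q) * derivative b - C (b.coeff p) * derivative c := by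
        rw [hd, derivative_sub, derivative_C_mul, derivative_C_mul]
      have hrel2 : d * derivative c = derivative d * c := by
        rw [hd, hdd]
        linear_combination (C (c.coeff q)) * hrel
      by_cases hdz : d = 0
      · refine ⟨(c.coeff q)⁻¹ * b.coeff p, mul_ne_zero (inv_ne_zero hcq) hbp, ?_⟩
        have h6 : C (c.coeff q) * b = C (b.coeff p) * c := by
          have := sub_eq_zero.mp (hd ▸ hdz)
          exact this
        calc b = C ((c.coeff q)⁻¹) * (C (c.coeff q) * b) := by
                rw [← mul_assoc, ← map_mul, inv_mul_cancel₀ hcq, map_one, one_mul]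
          _ = C ((c.coeff q)⁻¹) * (C (b.coeff p) * c) := by rw [h6]
          _ = C ((c.coeff q)⁻¹ * b.coeff p) * c := by rw [map_mul, mul_assoc]
      · -- d ≠ 0 : contradiction via induction
        have hdlt : d.natDegree < p := by
          have hble : d.natDegree ≤ p := by
            apply natDegree_le_iff_coeff_eq_zero.mpr
            intro i hi
            rw [hd, coeff_sub, coeff_C_mul, coeff_C_mul,
              coeff_eq_zero_of_natDegree_lt (by omega : b.natDegree < i),
              coeff_eq_zero_of_natDegree_lt (by omega : c.natDegree < i)]
            ring
          have hdp : d.coeff p = 0 := by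
            rw [hd, coeff_sub, coeff_C_mul, coeff_C_mul, hpq]
            ring
          rcases Nat.lt_or_ge d.natDegree p with h | h
          · exact h
          · exfalso
            have : d.natDegree = p := le_antisymm hble h
            exact hdz (leadingCoeff_eq_zero.mp (by rw [leadingCoeff, this, hdp]))
        obtain ⟨μ', hμ', hdc'⟩ := ih (d.natDegree + c.natDegree)
          (by omega) d c le_rfl hdz hc hrel2
        exfalso
        have : d.natDegree = c.natDegree := by
          rw [hdc', natDegree_C_mul hμ']
        omega

lemma star_one_right (c : Polynomial (Polynomial k)) : star c 1 = c :=
  eqOfΦ (by rw [Φ_star, Φ_one, mul_one])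

lemma M_X : M (X : Polynomial k) = LinearMap.mulLeft k (X : Polynomial k) :=
  LinearMap.ext fun f => rfl

lemma Φ_algebraMap (γ : k) :
    Φ (C (C γ)) = algebraMap k (Module.End k (Polynomial k)) γ := by
  rw [Φ_C, ← Polynomial.algebraMap_eq]
  exact M.commutes γ

/-- the range of Φ as a subalgebra -/
def Wr : Subalgebra k (Module.End k (Polynomial k)) where
  carrier := Set.range (Φ (k := k))
  mul_mem' := by
    rintro _ _ ⟨c, rfl⟩ ⟨d, rfl⟩
    exact ⟨star c d, Φ_star c d⟩
  add_mem' := by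
    rintro _ _ ⟨c, rfl⟩ ⟨d, rfl⟩
    exact ⟨c + d, Φ_add c d⟩
  algebraMap_mem' := fun γ => ⟨C (C γ), Φ_algebraMap γ⟩

lemma mem_range_Φ {A : Module.End k (Polynomial k)}
    (hA : A ∈ Algebra.adjoin k
      ({LinearMap.mulLeft k Polynomial.X, Polynomial.derivative} :
        Set (Module.End k (Polynomial k)))) : ∃ c, Φ c = A := by
  have hle : Algebra.adjoin k
      ({LinearMap.mulLeft k Polynomial.X, Polynomial.derivative} :
        Set (Module.End k (Polynomial k))) ≤ Wr := by
    apply Algebra.adjoin_le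
    rintro A (rfl | rfl)
    · exact ⟨C X, by rw [Φ_C, M_X]⟩
    · exact ⟨X, Φ_X⟩
  exact hle hA

/-- star powers -/
def sp (u : Polynomial (Polynomial k)) : ℕ → Polynomial (Polynomial k)
  | 0 => 1
  | m + 1 => star u (sp u m)

lemma Φ_sp (u : Polynomial (Polynomial k)) (m : ℕ) : Φ (sp u m) = (Φ u) ^ m := by
  induction m with
  | zero => rw [sp, pow_zero, Φ_one]
  | succ m ih => rw [sp, Φ_star, ih, pow_succ']

lemma sp_one (u : Polynomial (Polynomial k)) : sp u 1 = u := by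
  rw [sp, sp, star_one_right]

lemma spBnd (u : Polynomial (Polynomial k)) (m : ℕ) :
    ∀ i, m * u.natDegree < i → (sp u m).coeff i = 0 := by
  induction m with
  | zero =>
      intro i hi
      rw [sp, coeff_one, if_neg (by omega)]
  | succ m ih =>
      intro i hi
      rw [sp]
      apply BND (nn := u.natDegree) (mm := m * u.natDegree)
        (fun j hj => coeff_eq_zero_of_natDegree_lt hj) ih
      have : (m + 1) * u.natDegree = u.natDegree + m * u.natDegree := by ring
      omega
  
lemma spTop (u : Polynomial (Polynomial k)) (m : ℕ) :
    (sp u m).coeff (m * u.natDegree) = (u.coeff u.natDegree) ^ m := by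
  induction m with
  | zero => rw [sp, pow_zero, Nat.zero_mul, coeff_one, if_pos rfl]
  | succ m ih =>
      rw [sp, pow_succ']
      have hidx : (m + 1) * u.natDegree = u.natDegree + m * u.natDegree := by ring
      rw [hidx]
      rw [TOP (fun j hj => coeff_eq_zero_of_natDegree_lt hj) (spBnd u m), ih]

lemma spDegLe (u : Polynomial (Polynomial k)) (m : ℕ) :
    (sp u m).natDegree ≤ m * u.natDegree :=
  natDegree_le_iff_coeff_eq_zero.mpr (spBnd u m)


/-- commutation with `p` (transported centralizer condition) -/
def CmP (p u : Polynomial (Polynomial k)) : Prop := Φ p * Φ u = Φ u * Φ p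

lemma CmP_star {p u v : Polynomial (Polynomial k)} (hu : CmP p u) (hv : CmP p v) :
    CmP p (star u v) := by
  unfold CmP at *
  rw [Φ_star, ← mul_assoc, hu, mul_assoc, hv, ← mul_assoc]

lemma CmP_one (p : Polynomial (Polynomial k)) : CmP p 1 := by
  unfold CmP; rw [Φ_one, mul_one, one_mul]

lemma CmP_sp {p u : Polynomial (Polynomial k)} (hu : CmP p u) (m : ℕ) :
    CmP p (sp u m) := by
  induction m with
  | zero => exact CmP_one p
  | succ m ih => exact CmP_star hu ih

lemma CmP_sub {p u v : Polynomial (Polynomial k)} (hu : CmP p u) (hv : CmP p v) :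
    CmP p (u - v) := by
  unfold CmP at *
  rw [Φ_sub, mul_sub, sub_mul, hu, hv]

lemma CmP_smul {p u : Polynomial (Polynomial k)} (hu : CmP p u) (γ : k) :
    CmP p (γ • u) := by
  unfold CmP at *
  rw [Φ_smul, mul_smul_comm, hu, smul_mul_assoc]

lemma star_comm_of_CmP {p u : Polynomial (Polynomial k)} (hu : CmP p u) :
    star p u = star u p :=
  eqOfΦ (by rw [Φ_star, Φ_star, hu])

lemma REL {p u : Polynomial (Polynomial k)} {mm : ℕ} (hn1 : 1 ≤ p.natDegree)
    (hu : CmP p u) (hub : ∀ j, mm < j → u.coeff j = 0) :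
    p.natDegree • (p.coeff p.natDegree * derivative (u.coeff mm))
      = mm • (derivative (p.coeff p.natDegree) * u.coeff mm) := by
  have h := U1 (c := p) (d := u) hn1
    (fun i hi => coeff_eq_zero_of_natDegree_lt hi) hub
  rw [star_comm_of_CmP hu, sub_self] at h
  exact sub_eq_zero.mp h.symm

lemma SCAL {p u : Polynomial (Polynomial k)} (hn1 : 1 ≤ p.natDegree)
    (hp0 : p ≠ 0) (hu : CmP p u) (hu0 : u.natDegree = 0) :
    ∃ γ : k, u = C (C γ) := by
  have h := REL (mm := 0) hn1 hu (fun j hj => coeff_eq_zero_of_natDegree_lt (by omega))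
  rw [zero_smul] at h
  have ha : p.coeff p.natDegree ≠ 0 := mt leadingCoeff_eq_zero.mp hp0
  have hn0 : (p.natDegree : Polynomial k) ≠ 0 := by
    have h' : p.natDegree ≠ 0 := by omega
    exact Nat.cast_ne_zero.mpr h'
  rw [nsmul_eq_mul] at h
  have h2 : derivative (u.coeff 0) = 0 := by
    rcases mul_eq_zero.mp h with h' | h'
    · exact absurd h' hn0
    · rcases mul_eq_zero.mp h' with h'' | h''
      · exact absurd h'' ha
      · exact h''
  have h3 : u.coeff 0 = C ((u.coeff 0).coeff 0) := eq_C_of_derivative_eq_zero h2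
  refine ⟨(u.coeff 0).coeff 0, ?_⟩
  conv_lhs => rw [eq_C_of_natDegree_eq_zero hu0, h3]

lemma CmP_scalar_comm (γ : k) (v : Polynomial (Polynomial k)) :
    star (C (C γ)) v = star v (C (C γ)) := by
  apply eqOfΦ
  rw [Φ_star, Φ_star, Φ_algebraMap]
  rw [Algebra.commutes]


lemma PL {p : Polynomial (Polynomial k)} (e : ℕ)
    (IH : ∀ u v : Polynomial (Polynomial k), CmP p u → CmP p v → ∀ j,
      u.natDegree + v.natDegree < j + e → (star u v - star v u).coeff j = 0) :
    ∀ m, 1 ≤ m → ∀ w z : Polynomial (Polynomial k), CmP p w → CmP p z →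
      e ≤ w.natDegree + z.natDegree →
      (star (sp w m) z - star z (sp w m)).coeff (m * w.natDegree + z.natDegree - e)
        = m • ((w.coeff w.natDegree) ^ (m - 1)
            * (star w z - star z w).coeff (w.natDegree + z.natDegree - e)) := by
  intro m
  induction m with
  | zero => intro h; omega
  | succ m ihm =>
    intro _ w z hw hz he
    by_cases hm0 : m = 0
    · subst hm0
      have h1 : sp w (0 + 1) = w := sp_one w
      have hidx : (0 + 1) * w.natDegree + z.natDegree - e
          = w.natDegree + z.natDegree - e := by omega
      rw [h1, hidx]
      simp
    · have hm1 : 1 ≤ m := by omega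
      have IH2 := ihm hm1 w z hw hz he
      set sw := w.natDegree with hsw
      set tz := z.natDegree with htz
      set bb := w.coeff sw with hbbdef
      have hsw_le : sw ≤ m * sw := Nat.le_mul_of_pos_left sw (by omega)
      have he2 : e ≤ m * sw + tz := by omega
      have hop : star (sp w (m + 1)) z - star z (sp w (m + 1))
          = star w (star (sp w m) z - star z (sp w m))
            + star (star w z - star z w) (sp w m) := by
        apply eqOfΦ
        rw [sp]
        simp only [Φ_sub, Φ_add, Φ_star, mul_sub, sub_mul, mul_assoc]
        abel
      rw [hop, coeff_add]
      have hbnd1 : ∀ i, m * sw + tz - e < i →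
          (star (sp w m) z - star z (sp w m)).coeff i = 0 := by
        intro i hi
        apply IH (sp w m) z (CmP_sp hw m) hz
        have hsp := spDegLe w m
        rw [← hsw] at hsp
        omega
      have hbnd2 : ∀ i, sw + tz - e < i → (star w z - star z w).coeff i = 0 := by
        intro i hi
        apply IH w z hw hz
        omega
      have t1 : (star w (star (sp w m) z - star z (sp w m))).coeff
            ((m + 1) * sw + tz - e)
          = bb * (star (sp w m) z - star z (sp w m)).coeff (m * sw + tz - e) := by
        have h := TOP (c := w) (nn := sw) (mm := m * sw + tz - e)
          (fun i hi => coeff_eq_zero_of_natDegree_lt hi) hbnd1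
        rw [show (m + 1) * sw + tz - e = sw + (m * sw + tz - e) by
          have : (m + 1) * sw = sw + m * sw := by ring
          omega]
        exact h
      have t2 : (star (star w z - star z w) (sp w m)).coeff ((m + 1) * sw + tz - e)
          = (star w z - star z w).coeff (sw + tz - e) * bb ^ m := by
        have h := TOP (c := star w z - star z w) (d := sp w m)
          (nn := sw + tz - e) (mm := m * sw) hbnd2 (spBnd w m)
        rw [spTop] at h
        rw [show (m + 1) * sw + tz - e = (sw + tz - e) + m * sw by
          have : (m + 1) * sw = sw + m * sw := by ring
          omega]
        exact h
      rw [t1, t2, IH2]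
      set β := (star w z - star z w).coeff (sw + tz - e) with hβdef
      have hbb : bb * bb ^ (m - 1) = bb ^ m := by
        rw [← pow_succ']
        congr 1
        omega
      rw [show m + 1 - 1 = m from rfl]
      simp only [nsmul_eq_mul]
      push_cast
      linear_combination ((m : Polynomial k) * β) * hbb


lemma Hmain {p : Polynomial (Polynomial k)} (hp0 : p ≠ 0) (hn1 : 1 ≤ p.natDegree) :
    ∀ e : ℕ, ∀ u v : Polynomial (Polynomial k), CmP p u → CmP p v → ∀ j,
      u.natDegree + v.natDegree < j + e → (star u v - star v u).coeff j = 0 := by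
  intro e
  induction e with
  | zero =>
      intro u v _ _ j hj
      rw [coeff_sub,
        BND (fun i hi => coeff_eq_zero_of_natDegree_lt hi)
          (fun i hi => coeff_eq_zero_of_natDegree_lt hi) j (by omega),
        BND (fun i hi => coeff_eq_zero_of_natDegree_lt hi)
          (fun i hi => coeff_eq_zero_of_natDegree_lt hi) j (by omega), sub_zero]
  | succ e IH =>
      intro u v hu hv j hj
      by_cases hje : u.natDegree + v.natDegree < j + e
      · exact IH u v hu hv j hje
      have hjeq : j + e = u.natDegree + v.natDegree := by omega
      by_cases hu0 : u = 0
      · subst hu0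
        rw [star_zero_left, star_zero_right, sub_zero, coeff_zero]
      by_cases hv0 : v = 0
      · subst hv0
        rw [star_zero_left, star_zero_right, sub_zero, coeff_zero]
      by_cases hs0 : u.natDegree = 0
      · obtain ⟨γ, hγ⟩ := SCAL hn1 hp0 hu hs0
        have hcom : star u v = star v u := by
          rw [hγ, CmP_scalar_comm γ v]
        rw [hcom, sub_self, coeff_zero]
      by_cases ht0 : v.natDegree = 0
      · obtain ⟨γ, hγ⟩ := SCAL hn1 hp0 hv ht0
        have hcom : star u v = star v u := by
          rw [hγ, CmP_scalar_comm γ u]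
        rw [hcom, sub_self, coeff_zero]
      -- main case
      have hs1 : 1 ≤ u.natDegree := by omega
      have ht1 : 1 ≤ v.natDegree := by omega
      have hbb0 : u.coeff u.natDegree ≠ 0 := fun h => hu0 (leadingCoeff_eq_zero.mp h)
      have hcc0 : v.coeff v.natDegree ≠ 0 := fun h => hv0 (leadingCoeff_eq_zero.mp h)
      have he_le : e ≤ u.natDegree + v.natDegree := by omega
      have hts : v.natDegree ≤ u.natDegree * v.natDegree :=
        Nat.le_mul_of_pos_left v.natDegree (by omega)
      have hst : u.natDegree ≤ v.natDegree * u.natDegree :=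
        Nat.le_mul_of_pos_left u.natDegree (by omega)
      have hU'deg : (sp u v.natDegree).natDegree = v.natDegree * u.natDegree :=
        le_antisymm (spDegLe u v.natDegree)
          (le_natDegree_of_ne_zero (by rw [spTop]; exact pow_ne_zero _ hbb0))
      have hV'deg : (sp v u.natDegree).natDegree = u.natDegree * v.natDegree :=
        le_antisymm (spDegLe v u.natDegree)
          (le_natDegree_of_ne_zero (by rw [spTop]; exact pow_ne_zero _ hcc0))
      -- the two leading-coefficient relations and proportionality
      have ha : p.coeff p.natDegree ≠ 0 := fun h => hp0 (leadingCoeff_eq_zero.mp h)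
      have hnn : (p.natDegree : Polynomial k) ≠ 0 :=
        Nat.cast_ne_zero.mpr (by omega)
      have hrel1 := REL (u := sp u v.natDegree) (mm := v.natDegree * u.natDegree)
        hn1 (CmP_sp hu v.natDegree) (spBnd u v.natDegree)
      have hrel2 := REL (u := sp v u.natDegree) (mm := u.natDegree * v.natDegree)
        hn1 (CmP_sp hv u.natDegree) (spBnd v u.natDegree)
      rw [spTop] at hrel1 hrel2
      have hW : (u.coeff u.natDegree) ^ v.natDegree
            * derivative ((v.coeff v.natDegree) ^ u.natDegree)
          = derivative ((u.coeff u.natDegree) ^ v.natDegree)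
            * (v.coeff v.natDegree) ^ u.natDegree := by
        simp only [nsmul_eq_mul] at hrel1 hrel2
        push_cast at hrel1 hrel2
        have h3 : (p.natDegree : Polynomial k) * (p.coeff p.natDegree *
            ((u.coeff u.natDegree) ^ v.natDegree
              * derivative ((v.coeff v.natDegree) ^ u.natDegree)
            - derivative ((u.coeff u.natDegree) ^ v.natDegree)
              * (v.coeff v.natDegree) ^ u.natDegree)) = 0 := by
          linear_combination ((u.coeff u.natDegree) ^ v.natDegree) * hrel2
            - ((v.coeff v.natDegree) ^ u.natDegree) * hrel1
        rcases mul_eq_zero.mp h3 with h' | h'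
        · exact absurd h' hnn
        rcases mul_eq_zero.mp h' with h'' | h''
        · exact absurd h'' ha
        · exact sub_eq_zero.mp h''
      obtain ⟨μ, hμ0, hμ⟩ := PROP
        (((u.coeff u.natDegree) ^ v.natDegree).natDegree
          + ((v.coeff v.natDegree) ^ u.natDegree).natDegree)
        ((u.coeff u.natDegree) ^ v.natDegree) ((v.coeff v.natDegree) ^ u.natDegree)
        le_rfl (pow_ne_zero _ hbb0) (pow_ne_zero _ hcc0) hW
      -- key vanishing
      have hX1 : (star (sp u v.natDegree) (sp v u.natDegree)
            - star (sp v u.natDegree) (sp u v.natDegree)).coeff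
            (v.natDegree * u.natDegree + u.natDegree * v.natDegree - e) = 0 := by
        by_cases hWz : sp u v.natDegree - μ • sp v u.natDegree = 0
        · have hΦeq : Φ (sp u v.natDegree) = μ • Φ (sp v u.natDegree) := by
            have h4 := congrArg Φ hWz
            rw [Φ_sub, Φ_smul, Φ_zero, sub_eq_zero] at h4
            exact h4
          have hcomm : star (sp u v.natDegree) (sp v u.natDegree)
              = star (sp v u.natDegree) (sp u v.natDegree) := by
            apply eqOfΦ
            rw [Φ_star, Φ_star, hΦeq, smul_mul_assoc, mul_smul_comm]
          rw [hcomm, sub_self, coeff_zero]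
        · have hCmW : CmP p (sp u v.natDegree - μ • sp v u.natDegree) :=
            CmP_sub (CmP_sp hu v.natDegree) (CmP_smul (CmP_sp hv u.natDegree) μ)
          have hWb : ∀ i, u.natDegree * v.natDegree - 1 < i →
              (sp u v.natDegree - μ • sp v u.natDegree).coeff i = 0 := by
            intro i hi
            rw [coeff_sub, coeff_smul]
            by_cases hieq : i = u.natDegree * v.natDegree
            · subst hieq
              rw [show u.natDegree * v.natDegree = v.natDegree * u.natDegree
                from by ring, spTop u v.natDegree]
              rw [show v.natDegree * u.natDegree = u.natDegree * v.natDegree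
                from by ring, spTop v u.natDegree]
              rw [smul_eq_C_mul]
              rw [show (u.coeff u.natDegree) ^ v.natDegree
                = C μ * (v.coeff v.natDegree) ^ u.natDegree from hμ]
              ring
            · have hcm : u.natDegree * v.natDegree = v.natDegree * u.natDegree := by
                ring
              rw [spBnd u v.natDegree i (by omega), spBnd v u.natDegree i (by omega),
                smul_zero, sub_zero]
          have hWdeg : (sp u v.natDegree - μ • sp v u.natDegree).natDegree
              ≤ u.natDegree * v.natDegree - 1 :=
            natDegree_le_iff_coeff_eq_zero.mpr hWb
          have hkey : ∀ (A B : Module.End k (Polynomial k)),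
              (A - μ • B) * A - A * (A - μ • B) = μ • (A * B - B * A) := by
            intro A B
            rw [sub_mul, mul_sub, smul_mul_assoc, mul_smul_comm, smul_sub]
            abel
          have hident : star (sp u v.natDegree) (sp v u.natDegree)
              - star (sp v u.natDegree) (sp u v.natDegree)
              = μ⁻¹ • (star (sp u v.natDegree - μ • sp v u.natDegree) (sp u v.natDegree)
                - star (sp u v.natDegree) (sp u v.natDegree - μ • sp v u.natDegree)) := by
            apply eqOfΦ
            rw [Φ_sub, Φ_smul, Φ_sub, Φ_star, Φ_star, Φ_star, Φ_star, Φ_sub, Φ_smul]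
            rw [hkey (Φ (sp u v.natDegree)) (Φ (sp v u.natDegree)), inv_smul_smul₀ hμ0]
          have hcm : u.natDegree * v.natDegree = v.natDegree * u.natDegree := by
            ring
          have hIH3 : (star (sp u v.natDegree - μ • sp v u.natDegree)
                (sp u v.natDegree)
              - star (sp u v.natDegree)
                (sp u v.natDegree - μ • sp v u.natDegree)).coeff
              (v.natDegree * u.natDegree + u.natDegree * v.natDegree - e) = 0 := by
            apply IH _ _ hCmW (CmP_sp hu v.natDegree)
            rw [hU'deg]
            omega
          rw [hident, coeff_smul, hIH3, smul_zero]
      -- power chains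
      have he1 : e ≤ u.natDegree + (sp v u.natDegree).natDegree := by
        rw [hV'deg]; omega
      have step1 := PL e IH v.natDegree ht1 u (sp v u.natDegree) hu
        (CmP_sp hv u.natDegree) he1
      rw [hV'deg] at step1
      have he2 : e ≤ v.natDegree + u.natDegree := by omega
      have step2 := PL e IH u.natDegree hs1 v u hv hu he2
      have inner1 : (star u (sp v u.natDegree) - star (sp v u.natDegree) u).coeff
            (u.natDegree + u.natDegree * v.natDegree - e)
          = -((star (sp v u.natDegree) u - star u (sp v u.natDegree)).coeff
            (u.natDegree * v.natDegree + u.natDegree - e)) := by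
        rw [coeff_sub, coeff_sub,
          show u.natDegree + u.natDegree * v.natDegree - e
            = u.natDegree * v.natDegree + u.natDegree - e from by omega]
        ring
      have inner2 : (star v u - star u v).coeff (v.natDegree + u.natDegree - e)
          = -((star u v - star v u).coeff (u.natDegree + v.natDegree - e)) := by
        rw [coeff_sub, coeff_sub,
          show v.natDegree + u.natDegree - e = u.natDegree + v.natDegree - e
            from by omega]
        ring
      have hchain : (0 : Polynomial k)
          = v.natDegree • ((u.coeff u.natDegree) ^ (v.natDegree - 1)
            * (-(u.natDegree • ((v.coeff v.natDegree) ^ (u.natDegree - 1)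
              * (-((star u v - star v u).coeff
                  (u.natDegree + v.natDegree - e))))))) := by
        rw [← inner2, ← step2, ← inner1, ← step1, hX1]
      have hβz : (star u v - star v u).coeff (u.natDegree + v.natDegree - e) = 0 := by
        simp only [nsmul_eq_mul] at hchain
        have hz : ((v.natDegree : Polynomial k) * (u.natDegree : Polynomial k))
            * ((u.coeff u.natDegree) ^ (v.natDegree - 1)
              * (v.coeff v.natDegree) ^ (u.natDegree - 1))
            * (star u v - star v u).coeff (u.natDegree + v.natDegree - e) = 0 := by
          linear_combination -hchain
        rcases mul_eq_zero.mp hz with h' | h'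
        · exfalso
          rcases mul_eq_zero.mp h' with h'' | h''
          · rcases mul_eq_zero.mp h'' with h3 | h3
            · exact (Nat.cast_ne_zero.mpr (by omega : v.natDegree ≠ 0)) h3
            · exact (Nat.cast_ne_zero.mpr (by omega : u.natDegree ≠ 0)) h3
          · rcases mul_eq_zero.mp h'' with h3 | h3
            · exact pow_ne_zero _ hbb0 h3
            · exact pow_ne_zero _ hcc0 h3
        · exact h'
      rw [show j = u.natDegree + v.natDegree - e from by omega]
      exact hβz


end
end WeylCent

/-- Let `k` be a field of characteristic zero and let `W` be the ring of polynomial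
differential operators in one variable over `k`, i.e. the `k`-subalgebra of
`End_k (k[X])` generated by multiplication by `X` and the derivative `d/dX`.  Then the
centralizer of every nonconstant operator `P ∈ W` (one which is not multiplication by a
scalar) is a commutative ring. -/
theorem centralizer_commutative_of_differential_operator
    (k : Type*) [Field k] [CharZero k]
    (P : Module.End k (Polynomial k))
    (hP : P ∈ Algebra.adjoin k
      ({LinearMap.mulLeft k Polynomial.X, Polynomial.derivative} :
        Set (Module.End k (Polynomial k))))
    (hPnc : ∀ c : k, P ≠ algebraMap k (Module.End k (Polynomial k)) c) :
    ∀ Q ∈ Algebra.adjoin k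
        ({LinearMap.mulLeft k Polynomial.X, Polynomial.derivative} :
          Set (Module.End k (Polynomial k))),
      ∀ R ∈ Algebra.adjoin k
        ({LinearMap.mulLeft k Polynomial.X, Polynomial.derivative} :
          Set (Module.End k (Polynomial k))),
      P * Q = Q * P → P * R = R * P → Q * R = R * Q := by
  intro Q hQ R hR hPQ hPR
  obtain ⟨p, hp⟩ := WeylCent.mem_range_Φ hP
  obtain ⟨q, hq⟩ := WeylCent.mem_range_Φ hQ
  obtain ⟨r, hr⟩ := WeylCent.mem_range_Φ hR
  have hCq : WeylCent.CmP p q := by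
    unfold WeylCent.CmP
    rw [hp, hq]
    exact hPQ
  have hCr : WeylCent.CmP p r := by
    unfold WeylCent.CmP
    rw [hp, hr]
    exact hPR
  have hp0 : p ≠ 0 := by
    intro h
    apply hPnc 0
    rw [map_zero, ← hp, h, WeylCent.Φ_zero]
  by_cases hn0 : p.natDegree = 0
  · -- `P` is multiplication by a nonconstant polynomial
    have hpC : p = Polynomial.C (p.coeff 0) :=
      Polynomial.eq_C_of_natDegree_eq_zero hn0
    have hb' : Polynomial.derivative (p.coeff 0) ≠ 0 := by
      intro h
      have h2 : p.coeff 0 = Polynomial.C ((p.coeff 0).coeff 0) :=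
        Polynomial.eq_C_of_derivative_eq_zero h
      apply hPnc ((p.coeff 0).coeff 0)
      rw [← hp, ← WeylCent.Φ_algebraMap, ← h2, ← hpC]
    have hdeg0 : ∀ w : Polynomial (Polynomial k), WeylCent.CmP p w →
        w.natDegree = 0 := by
      intro w hw
      by_contra hd
      have hd1 : 1 ≤ w.natDegree := by omega
      have hw0 : w ≠ 0 := fun h => hd (by rw [h]; simp)
      have h := WeylCent.U1 (c := w) (d := p) (mm := 0) hd1
        (fun i hi => Polynomial.coeff_eq_zero_of_natDegree_lt hi)
        (fun i hi => Polynomial.coeff_eq_zero_of_natDegree_lt (by omega))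
      rw [WeylCent.star_comm_of_CmP hw, sub_self, zero_smul, sub_zero] at h
      have hlc : w.coeff w.natDegree ≠ 0 :=
        fun hh => hw0 (Polynomial.leadingCoeff_eq_zero.mp hh)
      rw [nsmul_eq_mul] at h
      rcases mul_eq_zero.mp h.symm with h' | h'
      · exact (Nat.cast_ne_zero.mpr (by omega : w.natDegree ≠ 0)) h'
      · rcases mul_eq_zero.mp h' with h'' | h''
        · exact hlc h''
        · exact hb' h''
    have hq0 := hdeg0 q hCq
    have hr0 := hdeg0 r hCr
    rw [← hq, ← hr]
    conv_lhs => rw [Polynomial.eq_C_of_natDegree_eq_zero hq0,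
      Polynomial.eq_C_of_natDegree_eq_zero hr0]
    conv_rhs => rw [Polynomial.eq_C_of_natDegree_eq_zero hq0,
      Polynomial.eq_C_of_natDegree_eq_zero hr0]
    rw [WeylCent.Φ_C, WeylCent.Φ_C, ← map_mul, ← map_mul, mul_comm]
  · have hn1 : 1 ≤ p.natDegree := by omega
    have hcomm : WeylCent.star q r = WeylCent.star r q := by
      have hz : WeylCent.star q r - WeylCent.star r q = 0 := by
        apply Polynomial.ext
        intro j
        rw [Polynomial.coeff_zero]
        exact WeylCent.Hmain hp0 hn1 (q.natDegree + r.natDegree + 1) q r hCq hCr j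
          (by omega)
      exact sub_eq_zero.mp hz
    rw [← hq, ← hr, ← WeylCent.Φ_star, hcomm, WeylCent.Φ_star]
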